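/- Let T be a densely defined operator that is C-selfadjoint, and let k ∈ ℕ be such that T^k is densely defined. If (T*)^k = (T^k)*, then T^k is C-selfadjoint. -/

import Mathlib

open InnerProductSpace in
/-- A conjugation on a complex inner product space: an antilinear involution
satisfying `⟪Cf, Cg⟫ = ⟪g, f⟫`. -/
structure Conjugation (H : Type*) [NormedAddCommGroup H] [InnerProductSpace ℂ H] where
  toFun : H → H
  map_add' : ∀ x y, toFun (x + y) = toFun x + toFun y
  map_smul' : ∀ (c : ℂ) (x : H), toFun (c • x) = (starRingEnd ℂ c) • toFun x
  invol : ∀ x, toFun (toFun x) = x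
  inner_map : ∀ x y, (inner ℂ (toFun x) (toFun y) : ℂ) = inner ℂ y x

/-- `T` is `C`-symmetric: `T ⊆ C T* C`. -/
noncomputable def CSymmetric {H : Type*} [NormedAddCommGroup H] [InnerProductSpace ℂ H]
    [CompleteSpace H] (C : Conjugation H) (T : H →ₗ.[ℂ] H) : Prop :=
  ∀ x : T.domain, ∃ hx : C.toFun x ∈ T.adjoint.domain,
    C.toFun (T.adjoint ⟨C.toFun x, hx⟩) = T x

/-- `T` is `C`-selfadjoint: `T = C T* C`. -/
noncomputable def CSelfAdjoint {H : Type*} [NormedAddCommGroup H] [InnerProductSpace ℂ H]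
    [CompleteSpace H] (C : Conjugation H) (T : H →ₗ.[ℂ] H) : Prop :=
  CSymmetric C T ∧ ∀ y : H, C.toFun y ∈ T.adjoint.domain → y ∈ T.domain

/-- Composition of partially defined linear maps, with its natural (maximal) domain. -/
noncomputable def LinearPMap.pcomp {R E F G : Type*} [Ring R] [AddCommGroup E] [Module R E]
    [AddCommGroup F] [Module R F] [AddCommGroup G] [Module R G]
    (g : F →ₗ.[R] G) (f : E →ₗ.[R] F) : E →ₗ.[R] G :=
  g.comp (f.domRestrict ((g.domain.comap f.toFun).map f.domain.subtype))
    (by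
      intro x
      obtain ⟨⟨y, hy, hyx⟩, hx2⟩ := x.2
      have h := LinearPMap.domRestrict_apply (f := f) (x := x) (y := y) (by exact hyx.symm)
      exact h ▸ hy)

/-- Natural powers of a partially defined linear map, `T^(n+1) = T ∘ T^n`, with
`T^0` the identity on the whole space. -/
noncomputable def LinearPMap.ppow {R E : Type*} [Ring R] [AddCommGroup E] [Module R E]
    (T : E →ₗ.[R] E) : ℕ → E →ₗ.[R] E
  | 0 => ⟨⊤, (⊤ : Submodule R E).subtype⟩
  | n + 1 => T.pcomp (T.ppow n)

lemma LinearPMap.mem_pcomp_domain {R E F G : Type*} [Ring R] [AddCommGroup E] [Module R E]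
    [AddCommGroup F] [Module R F] [AddCommGroup G] [Module R G]
    {g : F →ₗ.[R] G} {f : E →ₗ.[R] F} {x : E} :
    x ∈ (g.pcomp f).domain ↔ ∃ h : x ∈ f.domain, f ⟨x, h⟩ ∈ g.domain := by
  constructor
  · rintro ⟨hS, hf⟩
    obtain ⟨y, hy, hyx⟩ := hS
    refine ⟨hf, ?_⟩
    have hxy : (⟨x, hf⟩ : f.domain) = y := Subtype.ext hyx.symm
    rw [hxy]
    exact hy
  · rintro ⟨h, hg⟩
    exact ⟨⟨⟨x, h⟩, hg, rfl⟩, h⟩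

lemma LinearPMap.pcomp_apply' {R E F G : Type*} [Ring R] [AddCommGroup E] [Module R E]
    [AddCommGroup F] [Module R F] [AddCommGroup G] [Module R G]
    (g : F →ₗ.[R] G) (f : E →ₗ.[R] F) (x : (g.pcomp f).domain)
    (h1 : (x : E) ∈ f.domain) (h2 : f ⟨(x : E), h1⟩ ∈ g.domain) :
    (g.pcomp f) x = g ⟨f ⟨(x : E), h1⟩, h2⟩ := by
  refine congrArg (⇑g.toFun) (Subtype.ext ?_)
  exact f.domRestrict_apply rfl

lemma LinearPMap.eq_apply' {R E F : Type*} [Ring R] [AddCommGroup E] [Module R E]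
    [AddCommGroup F] [Module R F] {f g : E →ₗ.[R] F} (h : f = g) (x : E)
    (hx : x ∈ f.domain) : f ⟨x, hx⟩ = g ⟨x, h ▸ hx⟩ := by subst h; rfl

lemma csa_key {H : Type*} [NormedAddCommGroup H] [InnerProductSpace ℂ H] [CompleteSpace H]
    (C : Conjugation H) (T : H →ₗ.[ℂ] H) (hsa : CSelfAdjoint C T) (k : ℕ) (x : H) :
    (x ∈ (T.ppow k).domain ↔ C.toFun x ∈ (T.adjoint.ppow k).domain) ∧
    ∀ (hx : x ∈ (T.ppow k).domain) (hx' : C.toFun x ∈ (T.adjoint.ppow k).domain),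
      T.adjoint.ppow k ⟨C.toFun x, hx'⟩ = C.toFun (T.ppow k ⟨x, hx⟩) := by
  -- basic consequences of C-selfadjointness
  have hmem : ∀ z : H, z ∈ T.domain → C.toFun z ∈ T.adjoint.domain := fun z hz =>
    (hsa.1 ⟨z, hz⟩).choose
  have happ : ∀ (z : H) (hz : z ∈ T.domain) (hz' : C.toFun z ∈ T.adjoint.domain),
      T.adjoint ⟨C.toFun z, hz'⟩ = C.toFun (T ⟨z, hz⟩) := by
    intro z hz hz'
    obtain ⟨h1, h2⟩ := hsa.1 ⟨z, hz⟩
    have := congrArg C.toFun h2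
    rw [C.invol] at this
    convert this using 2
  induction k generalizing x with
  | zero =>
      exact ⟨⟨fun _ => Submodule.mem_top, fun _ => Submodule.mem_top⟩, fun _ _ => rfl⟩
  | succ n ih =>
      constructor
      · constructor
        · intro hx
          obtain ⟨h1, h2⟩ := LinearPMap.mem_pcomp_domain.mp hx
          have hC1 : C.toFun x ∈ (T.adjoint.ppow n).domain := (ih x).1.mp h1
          refine LinearPMap.mem_pcomp_domain.mpr ⟨hC1, ?_⟩
          rw [(ih x).2 h1 hC1]
          exact hmem _ h2
        · intro hx
          obtain ⟨h1', h2'⟩ := LinearPMap.mem_pcomp_domain.mp hx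
          have h1 : x ∈ (T.ppow n).domain := (ih x).1.mpr h1'
          rw [(ih x).2 h1 h1'] at h2'
          refine LinearPMap.mem_pcomp_domain.mpr ⟨h1, hsa.2 _ h2'⟩
      · intro hx hx'
        obtain ⟨h1, h2⟩ := LinearPMap.mem_pcomp_domain.mp hx
        obtain ⟨h1', h2'⟩ := LinearPMap.mem_pcomp_domain.mp hx'
        show (T.adjoint.pcomp (T.adjoint.ppow n)) _ = C.toFun ((T.pcomp (T.ppow n)) _)
        have e1 := LinearPMap.pcomp_apply' T.adjoint (T.adjoint.ppow n) ⟨C.toFun x, hx'⟩ h1' h2'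
        have e2 := LinearPMap.pcomp_apply' T (T.ppow n) ⟨x, hx⟩ h1 h2
        refine e1.trans (Eq.trans ?_ (congrArg C.toFun e2).symm)
        have heq : (T.adjoint.ppow n) ⟨C.toFun x, h1'⟩ = C.toFun ((T.ppow n) ⟨x, h1⟩) :=
          (ih x).2 h1 h1'
        have hsub : (⟨(T.adjoint.ppow n) ⟨C.toFun x, h1'⟩, h2'⟩ : T.adjoint.domain) =
            ⟨C.toFun ((T.ppow n) ⟨x, h1⟩), heq ▸ h2'⟩ := Subtype.ext heq
        rw [hsub]
        exact happ _ h2 _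

/-- If `T` is densely defined and `C`-selfadjoint, `T^k` is densely defined
and `(T*)^k = (T^k)*`, then `T^k` is `C`-selfadjoint. -/
theorem stmt_2 {H : Type*} [NormedAddCommGroup H] [InnerProductSpace ℂ H] [CompleteSpace H]
    (C : Conjugation H) (T : H →ₗ.[ℂ] H)
    (hdense : Dense (T.domain : Set H)) (hsa : CSelfAdjoint C T)
    (k : ℕ) (hkdense : Dense ((T.ppow k).domain : Set H))
    (hadj : T.adjoint.ppow k = (T.ppow k).adjoint) :
    CSelfAdjoint C (T.ppow k) := by
  constructor
  · intro x
    have hC : C.toFun x ∈ (T.adjoint.ppow k).domain :=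
      (csa_key C T hsa k x).1.mp x.2
    refine ⟨hadj ▸ hC, ?_⟩
    rw [← LinearPMap.eq_apply' hadj _ hC, (csa_key C T hsa k x).2 x.2 hC, C.invol]
  · intro y hy
    rw [← hadj] at hy
    exact (csa_key C T hsa k y).1.mpr hy
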